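/- Let $n > k \geq 1$ be integers, $N = 2^n - 1$, $m = 2^k - 1$. Let $S$ be a uniformly random $m$-element subset of $\{1, \ldots, N\}$ with $W_{(1)} = \min S$, and let $G$ be a random variable on $\{1, \ldots, 2^n\}$ with $P(G = j) = p_j$, independent of $S$. Fix an integer $q$ with $1 \leq q \leq N - m + 1$, suppose $P(G > q) = 1 - \sum_{j=1}^{q} p_j$, and suppose the denominator below is positive. Then $\frac{P(G>q)\,P(W_{(1)}=q)}{P(G=q)\,P(W_{(1)}\geq q) + P(G>q)\,P(W_{(1)}=q)} = \frac{\left(1 - \sum_{j=1}^{q} p_j\right)\frac{2^k-1}{2^n-q}}{p_q + \left(1 - \sum_{j=1}^{q} p_j\right)\frac{2^k-1}{2^n-q}}$. -/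

import Mathlib

open MeasureTheory ProbabilityTheory
open scoped ENNReal

/-- The `i`-th smallest element (1-indexed) of a finite set of naturals. -/
def nthSmallest (s : Finset ℕ) (i : ℕ) : ℕ := (s.sort (· ≤ ·)).getD (i - 1) 0

lemma min'_nthSmallest (s : Finset ℕ) (hs : s.Nonempty) :
    nthSmallest s 1 = s.min' hs := by
  have h0 : 0 < (s.sort (· ≤ ·)).length := by
    rw [Finset.length_sort]; exact Finset.card_pos.mpr hs
  rw [nthSmallest, List.getD_eq_getElem _ _ (by simpa using h0)]
  simpa using Finset.sorted_zero_eq_min' (h := h0)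

lemma measure_of_uniform {Ω : Type*} [MeasurableSpace Ω] (μ : Measure Ω) [IsProbabilityMeasure μ]
    (S : Ω → Finset ℕ) (T : Finset (Finset ℕ))
    (hSmeas : ∀ s : Finset ℕ, MeasurableSet (S ⁻¹' {s}))
    (hunif : ∀ s ∈ T, μ (S ⁻¹' {s}) = (T.card : ℝ≥0∞)⁻¹)
    (hsupp : μ {ω | S ω ∈ T} = 1)
    (Q : Finset ℕ → Prop) [DecidablePred Q] :
    μ {ω | Q (S ω)} = (T.filter Q).card * (T.card : ℝ≥0∞)⁻¹ := by
  have hBmeas : MeasurableSet {ω | S ω ∈ T} := by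
    have : {ω | S ω ∈ T} = ⋃ s ∈ T, S ⁻¹' {s} := by ext ω; simp
    rw [this]; exact T.measurableSet_biUnion (fun s _ => hSmeas s)
  have hcompl : μ {ω | S ω ∈ T}ᶜ = 0 := by
    rw [measure_compl hBmeas (measure_ne_top μ _), hsupp, measure_univ]; simp
  rw [← measure_inter_conull hcompl]
  have : {ω | Q (S ω)} ∩ {ω | S ω ∈ T} = ⋃ s ∈ (T.filter Q : Finset (Finset ℕ)), S ⁻¹' {s} := by
    ext ω; simp [and_comm]
  rw [this, measure_biUnion_finset ?_ (fun s _ => hSmeas s)]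
  · rw [Finset.sum_congr rfl (fun s hs => hunif s (Finset.mem_filter.mp hs).1)]
    simp [mul_comm]
  · intro a ha b hb hab
    simp only [Function.onFun]
    apply Set.disjoint_left.mpr
    intro ω h1 h2
    apply hab
    simp only [Set.mem_preimage, Set.mem_singleton_iff] at h1 h2
    rw [← h1, ← h2]

section count
variable (N m q : ℕ) (hq1 : 1 ≤ q) (hqN : q ≤ N) (hm : 1 ≤ m)

include hq1 hm in
lemma count_ge :
    ((Finset.Icc 1 N).powersetCard m |>.filter fun s => q ≤ nthSmallest s 1).card
      = (N + 1 - q).choose m := by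
  have : ((Finset.Icc 1 N).powersetCard m |>.filter fun s => q ≤ nthSmallest s 1)
      = (Finset.Icc q N).powersetCard m := by
    ext s
    simp only [Finset.mem_filter, Finset.mem_powersetCard]
    constructor
    · rintro ⟨⟨hsub, hcard⟩, hge⟩
      have hne : s.Nonempty := Finset.card_pos.mp (hcard ▸ hm)
      rw [min'_nthSmallest s hne] at hge
      refine ⟨fun x hx => ?_, hcard⟩
      have := Finset.mem_Icc.mp (hsub hx)
      exact Finset.mem_Icc.mpr ⟨le_trans hge (s.min'_le x hx), this.2⟩
    · rintro ⟨hsub, hcard⟩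
      have hne : s.Nonempty := Finset.card_pos.mp (hcard ▸ hm)
      refine ⟨⟨fun x hx => ?_, hcard⟩, ?_⟩
      · have := Finset.mem_Icc.mp (hsub hx)
        exact Finset.mem_Icc.mpr ⟨le_trans hq1 this.1, this.2⟩
      · rw [min'_nthSmallest s hne]
        exact Finset.le_min' _ _ _ fun y hy => (Finset.mem_Icc.mp (hsub hy)).1
  rw [this, Finset.card_powersetCard, Nat.card_Icc]

include hq1 hqN hm in
lemma count_eq :
    ((Finset.Icc 1 N).powersetCard m |>.filter fun s => nthSmallest s 1 = q).card
      = (N - q).choose (m - 1) := by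
  rw [show (N - q).choose (m-1) = ((Finset.Icc (q+1) N).powersetCard (m-1)).card by
    rw [Finset.card_powersetCard, Nat.card_Icc]; congr 1; omega]
  apply Finset.card_nbij' (fun s => s.erase q) (fun s => insert q s)
  · intro s hs
    simp only [Finset.mem_coe, Finset.mem_filter, Finset.mem_powersetCard] at hs ⊢
    obtain ⟨⟨hsub, hcard⟩, hmin⟩ := hs
    have hne : s.Nonempty := Finset.card_pos.mp (hcard ▸ hm)
    rw [min'_nthSmallest s hne] at hmin
    have hqmem : q ∈ s := hmin ▸ s.min'_mem hne
    refine ⟨fun x hx => ?_, by rw [Finset.card_erase_of_mem hqmem, hcard]⟩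
    have hxs := Finset.mem_of_mem_erase hx
    have hxq : x ≠ q := Finset.ne_of_mem_erase hx
    have h1 : q ≤ x := hmin ▸ s.min'_le x hxs
    exact Finset.mem_Icc.mpr ⟨by omega, (Finset.mem_Icc.mp (hsub hxs)).2⟩
  · intro s hs
    simp only [Finset.mem_coe, Finset.mem_filter, Finset.mem_powersetCard] at hs ⊢
    obtain ⟨hsub, hcard⟩ := hs
    have hqnot : q ∉ s := fun h => by
      have := (Finset.mem_Icc.mp (hsub h)).1; omega
    have hins : ∀ x ∈ insert q s, x ∈ Finset.Icc 1 N := by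
      intro x hx
      rcases Finset.mem_insert.mp hx with h | h
      · exact Finset.mem_Icc.mpr ⟨by omega, by omega⟩
      · have := Finset.mem_Icc.mp (hsub h); exact Finset.mem_Icc.mpr ⟨by omega, this.2⟩
    have hne : (insert q s).Nonempty := ⟨q, Finset.mem_insert_self q s⟩
    refine ⟨⟨hins, by rw [Finset.card_insert_of_notMem hqnot, hcard]; omega⟩, ?_⟩
    rw [min'_nthSmallest _ hne]
    apply le_antisymm
    · exact Finset.min'_le _ q (Finset.mem_insert_self q s)
    · apply Finset.le_min'
      intro y hy
      rcases Finset.mem_insert.mp hy with h | h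
      · omega
      · have := (Finset.mem_Icc.mp (hsub h)).1; omega
  · intro s hs
    simp only [Finset.mem_coe, Finset.mem_filter, Finset.mem_powersetCard] at hs
    obtain ⟨⟨hsub, hcard⟩, hmin⟩ := hs
    have hne : s.Nonempty := Finset.card_pos.mp (hcard ▸ hm)
    rw [min'_nthSmallest s hne] at hmin
    exact Finset.insert_erase (hmin ▸ s.min'_mem hne)
  · intro s hs
    simp only [Finset.mem_coe, Finset.mem_powersetCard] at hs
    apply Finset.erase_insert
    intro h
    have := (Finset.mem_Icc.mp (hs.1 h)).1; omega

end count

/-- **Corollaries 1 and 3 combined; formula (7) of the paper.**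
With `N = 2^n - 1`, `m = 2^k - 1`, `S` a uniformly random `m`-element subset of
`{1, ..., N}` with minimum `W_(1)`, and `G` a random variable on `{1, ..., 2^n}` with
`P(G = j) = p j`, independent of `S`: for `1 ≤ q ≤ N - m + 1`, if
`P(G > q) = 1 - ∑_{j=1}^q p j` and the denominator below is positive, then
`P(G>q) P(W_(1)=q) / (P(G=q) P(W_(1)≥q) + P(G>q) P(W_(1)=q))
  = (1 - ∑_{j≤q} p j) ((2^k-1)/(2^n-q)) / (p q + (1 - ∑_{j≤q} p j) ((2^k-1)/(2^n-q)))`. -/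
theorem grand_single_decoding_error_probability_formula
    (n k : ℕ) (hk : 1 ≤ k) (hkn : k < n)
    {Ω : Type*} [MeasurableSpace Ω] (μ : Measure Ω) [IsProbabilityMeasure μ]
    (S : Ω → Finset ℕ)
    (hSmeas : ∀ s : Finset ℕ, MeasurableSet (S ⁻¹' {s}))
    (hunif : ∀ s ∈ (Finset.Icc 1 (2 ^ n - 1)).powersetCard (2 ^ k - 1),
      μ (S ⁻¹' {s})
        = (((Finset.Icc 1 (2 ^ n - 1)).powersetCard (2 ^ k - 1)).card : ℝ≥0∞)⁻¹)
    (hsupp : μ {ω | S ω ∈ (Finset.Icc 1 (2 ^ n - 1)).powersetCard (2 ^ k - 1)} = 1)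
    (G : Ω → ℕ) (hG : Measurable G)
    (hGrange : ∀ ω, G ω ∈ Finset.Icc 1 (2 ^ n))
    (hindep : ∀ (j : ℕ) (s : Finset ℕ),
      μ ({ω | G ω = j} ∩ S ⁻¹' {s}) = μ {ω | G ω = j} * μ (S ⁻¹' {s}))
    (p : ℕ → ℝ≥0∞) (hp : ∀ j, μ {ω | G ω = j} = p j)
    (q : ℕ) (hq1 : 1 ≤ q) (hqN : q ≤ (2 ^ n - 1) - (2 ^ k - 1) + 1)
    (hGtail : μ {ω | q < G ω} = 1 - ∑ j ∈ Finset.Icc 1 q, p j)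
    (hden : 0 < μ {ω | G ω = q} * μ {ω | q ≤ nthSmallest (S ω) 1} +
      μ {ω | q < G ω} * μ {ω | nthSmallest (S ω) 1 = q}) :
    (μ {ω | q < G ω} * μ {ω | nthSmallest (S ω) 1 = q}) /
      (μ {ω | G ω = q} * μ {ω | q ≤ nthSmallest (S ω) 1} +
        μ {ω | q < G ω} * μ {ω | nthSmallest (S ω) 1 = q})
    = ((1 - ∑ j ∈ Finset.Icc 1 q, p j) *
        (((2 ^ k - 1 : ℕ) : ℝ≥0∞) / ((2 ^ n - q : ℕ) : ℝ≥0∞))) /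
      (p q + (1 - ∑ j ∈ Finset.Icc 1 q, p j) *
        (((2 ^ k - 1 : ℕ) : ℝ≥0∞) / ((2 ^ n - q : ℕ) : ℝ≥0∞))) := by
  have h2k : 1 < 2 ^ k := Nat.one_lt_two_pow (by omega)
  have h2n : 2 ^ k < 2 ^ n := Nat.pow_lt_pow_right (by norm_num) hkn
  have hm : 1 ≤ 2 ^ k - 1 := by omega
  have hqN' : q ≤ 2 ^ n - 1 := by omega
  set T := (Finset.Icc 1 (2 ^ n - 1)).powersetCard (2 ^ k - 1) with hTdef
  set t : ℝ≥0∞ := (T.card : ℝ≥0∞)⁻¹ with htdef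
  have hB : μ {ω | nthSmallest (S ω) 1 = q}
      = (((2 ^ n - 1 - q).choose (2 ^ k - 1 - 1) : ℕ) : ℝ≥0∞) * t := by
    have := measure_of_uniform μ S T hSmeas hunif hsupp (fun s => nthSmallest s 1 = q)
    rwa [hTdef, count_eq (2 ^ n - 1) (2 ^ k - 1) q hq1 hqN' hm] at this
  have hD : μ {ω | q ≤ nthSmallest (S ω) 1}
      = (((2 ^ n - q).choose (2 ^ k - 1) : ℕ) : ℝ≥0∞) * t := by
    have := measure_of_uniform μ S T hSmeas hunif hsupp (fun s => q ≤ nthSmallest s 1)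
    rw [hTdef, count_ge (2 ^ n - 1) (2 ^ k - 1) q hq1 hm] at this
    rwa [show 2 ^ n - 1 + 1 - q = 2 ^ n - q by omega] at this
  -- the key combinatorial identity
  have hnat : (2 ^ k - 1) * ((2 ^ n - q).choose (2 ^ k - 1))
      = (2 ^ n - q) * ((2 ^ n - 1 - q).choose (2 ^ k - 1 - 1)) := by
    have h := Nat.add_one_mul_choose_eq (2 ^ n - 1 - q) (2 ^ k - 1 - 1)
    rw [show 2 ^ n - 1 - q + 1 = 2 ^ n - q by omega,
      show 2 ^ k - 1 - 1 + 1 = 2 ^ k - 1 by omega] at h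
    rw [mul_comm]
    exact h.symm
  have hd0' : ((2 ^ n - q : ℕ) : ℝ≥0∞) ≠ 0 := by
    simp only [ne_eq, Nat.cast_eq_zero]; omega
  have hdt : ((2 ^ n - q : ℕ) : ℝ≥0∞) ≠ ⊤ := ENNReal.natCast_ne_top _
  have hkey : μ {ω | nthSmallest (S ω) 1 = q}
      = (((2 ^ k - 1 : ℕ) : ℝ≥0∞) / ((2 ^ n - q : ℕ) : ℝ≥0∞)) *
        μ {ω | q ≤ nthSmallest (S ω) 1} := by
    rw [hB, hD, div_eq_mul_inv]
    have hcast : ((2 ^ k - 1 : ℕ) : ℝ≥0∞) * (((2 ^ n - q).choose (2 ^ k - 1) : ℕ) : ℝ≥0∞)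
        = ((2 ^ n - q : ℕ) : ℝ≥0∞) * (((2 ^ n - 1 - q).choose (2 ^ k - 1 - 1) : ℕ) : ℝ≥0∞) := by
      rw [← Nat.cast_mul, ← Nat.cast_mul, hnat]
    rw [show ((2 ^ k - 1 : ℕ) : ℝ≥0∞) * (((2 ^ n - q : ℕ) : ℝ≥0∞))⁻¹ *
          ((((2 ^ n - q).choose (2 ^ k - 1) : ℕ) : ℝ≥0∞) * t)
        = ((2 ^ k - 1 : ℕ) : ℝ≥0∞) * (((2 ^ n - q).choose (2 ^ k - 1) : ℕ) : ℝ≥0∞) * t *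
          (((2 ^ n - q : ℕ) : ℝ≥0∞))⁻¹ by ring, hcast,
      show ((2 ^ n - q : ℕ) : ℝ≥0∞) * (((2 ^ n - 1 - q).choose (2 ^ k - 1 - 1) : ℕ) : ℝ≥0∞) * t *
          (((2 ^ n - q : ℕ) : ℝ≥0∞))⁻¹
        = (((2 ^ n - q : ℕ) : ℝ≥0∞) * (((2 ^ n - q : ℕ) : ℝ≥0∞))⁻¹) *
          ((((2 ^ n - 1 - q).choose (2 ^ k - 1 - 1) : ℕ) : ℝ≥0∞) * t) by ring,
      ENNReal.mul_inv_cancel hd0' hdt, one_mul]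
  have hD0 : μ {ω | q ≤ nthSmallest (S ω) 1} ≠ 0 := by
    intro h
    rw [h, mul_zero] at hkey
    rw [h, hkey, mul_zero, mul_zero, add_zero] at hden
    exact lt_irrefl 0 hden
  have hDt : μ {ω | q ≤ nthSmallest (S ω) 1} ≠ ⊤ := measure_ne_top μ _
  rw [hGtail, hp q, hkey, ← mul_assoc,
    show p q * μ {ω | q ≤ nthSmallest (S ω) 1} +
        (1 - ∑ j ∈ Finset.Icc 1 q, p j) *
          (((2 ^ k - 1 : ℕ) : ℝ≥0∞) / ((2 ^ n - q : ℕ) : ℝ≥0∞)) *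
          μ {ω | q ≤ nthSmallest (S ω) 1}
      = (p q + (1 - ∑ j ∈ Finset.Icc 1 q, p j) *
          (((2 ^ k - 1 : ℕ) : ℝ≥0∞) / ((2 ^ n - q : ℕ) : ℝ≥0∞))) *
          μ {ω | q ≤ nthSmallest (S ω) 1} by ring]
  exact ENNReal.mul_div_mul_right _ _ hD0 hDt
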